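/- arXiv:1304.3812 — 4 statements merged into one kernel-verified Lean document; each statement's English description precedes it below -/
import Mathlib

section
/- Let F be a finite field, let g : F^v → F be a v-variate polynomial with degree at most d_j in its j-th variable, and let H ∈ F satisfy H ≠ Σ_{b ∈ {0,1}^v} g(b). Suppose for each j ∈ {1, …, v} a prover strategy is given, i.e., a function ĝ_j assigning to each prefix (r_1, …, r_{j−1}) ∈ F^{j−1} a univariate polynomial ĝ_j[r_1,…,r_{j−1}] over F of degree at most d_j, with ĝ_1 a fixed univariate polynomial satisfying ĝ_1(0) + ĝ_1(1) = H. Then the probability, over (r_1, …, r_v) drawn uniformly at random from F^v, that simultaneously (i) ĝ_j[r_1,…,r_{j−1}](0) + ĝ_j[r_1,…,r_{j−1}](1) = ĝ_{j−1}[r_1,…,r_{j−2}](r_{j−1}) for every 2 ≤ j ≤ v, and (ii) ĝ_v[r_1,…,r_{v−1}](r_v) = g(r_1, …, r_v), is at most (Σ_{j=1}^{v} d_j)/|F|. -/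
open MvPolynomial

/-- Coercion of a Boolean value to an element of a field (`true ↦ 1`, `false ↦ 0`). -/
def bF {F : Type*} [Field F] (b : Bool) : F := if b then 1 else 0

/-- Coercion of a Boolean vector to a vector of field elements. -/
def bvec {F : Type*} [Field F] {ι : Type*} (b : ι → Bool) : ι → F := fun i => bF (b i)

/-- The prefix `(r_0, …, r_{j-1})` of a vector `r ∈ F^v`. -/
def prefixOf {F : Type*} {v : ℕ} (r : Fin v → F) (j : Fin v) : Fin j.val → F :=
  fun i => r ⟨i.val, lt_trans i.2 j.2⟩

namespace SCAux

variable {F : Type*} [Field F] {v : ℕ}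

/-- Assignment of polynomial values: variables below `j` get constants from `r`,
variable `j` gets `X`, variables above `j` get boolean constants from `b`. -/
noncomputable def asg (r : Fin v → F) (b : Fin v → Bool) (j : ℕ) : Fin v → Polynomial F :=
  fun i => if i.val < j then Polynomial.C (r i)
    else if i.val = j then Polynomial.X else Polynomial.C (bF (b i))

/-- Field-valued version of `asg` with `X ↦ x`. -/
def evp (r : Fin v → F) (b : Fin v → Bool) (j : ℕ) (x : F) : Fin v → F :=
  fun i => if i.val < j then r i else if i.val = j then x else bF (b i)

/-- Boolean vectors vanishing below `k`. -/
def Bset (v k : ℕ) : Finset (Fin v → Bool) :=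
  Finset.univ.filter fun b => ∀ i : Fin v, i.val < k → b i = false

lemma mem_Bset {k : ℕ} {b : Fin v → Bool} :
    b ∈ Bset v k ↔ ∀ i : Fin v, i.val < k → b i = false := by
  simp [Bset]

/-- The honest round-`j` polynomial. -/
noncomputable def sPoly (g : MvPolynomial (Fin v) F) (r : Fin v → F) (j : ℕ) : Polynomial F :=
  ∑ b ∈ Bset v (j + 1), MvPolynomial.aeval (asg r b j) g

lemma eval_aeval_asg (g : MvPolynomial (Fin v) F) (r : Fin v → F) (b : Fin v → Bool)
    (j : ℕ) (x : F) :
    (MvPolynomial.aeval (asg r b j) g).eval x = MvPolynomial.eval (evp r b j x) g := by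
  have h := DFunLike.congr_fun (MvPolynomial.comp_aeval (asg r b j) (Polynomial.aeval x)) g
  simp only [AlgHom.comp_apply] at h
  have h2 : (fun i => Polynomial.aeval x (asg r b j i)) = evp r b j x := by
    funext i
    unfold asg evp
    split_ifs <;> simp
  have h3 : Polynomial.aeval x (MvPolynomial.aeval (asg r b j) g)
      = (MvPolynomial.aeval (asg r b j) g).eval x := by
    rw [Polynomial.coe_aeval_eq_eval]
  have h4 : (MvPolynomial.aeval (evp r b j x) g : F) = MvPolynomial.eval (evp r b j x) g := rfl
  rw [h2, h4] at h
  rw [← h3, h]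

lemma Bset_split {M : Type*} [AddCommMonoid M] {k : ℕ} (hk : k < v)
    (f : (Fin v → Bool) → M) :
    ∑ b ∈ Bset v k, f b
      = ∑ b ∈ Bset v (k + 1),
          (f (Function.update b ⟨k, hk⟩ false) + f (Function.update b ⟨k, hk⟩ true)) := by
  have key : ∑ b ∈ Bset v k, f b
      = ∑ p ∈ (Bset v (k + 1)) ×ˢ (Finset.univ : Finset Bool),
          f (Function.update p.1 ⟨k, hk⟩ p.2) := by
    refine Finset.sum_nbij' (fun b => (Function.update b ⟨k, hk⟩ false, b ⟨k, hk⟩))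
      (fun p => Function.update p.1 ⟨k, hk⟩ p.2) ?_ ?_ ?_ ?_ ?_
    · intro b hb
      rw [Finset.mem_product]
      refine ⟨mem_Bset.mpr fun i hi => ?_, Finset.mem_univ _⟩
      show Function.update b ⟨k, hk⟩ false i = false
      by_cases hik : i = ⟨k, hk⟩
      · subst hik; simp
      · rw [Function.update_of_ne hik]
        have hik' : i.val ≠ k := fun h => hik (Fin.ext h)
        exact mem_Bset.mp hb i (by omega)
    · intro p hp
      rw [Finset.mem_product] at hp
      refine mem_Bset.mpr fun i hi => ?_
      have hik : i ≠ ⟨k, hk⟩ := by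
        intro h
        rw [h] at hi
        simp at hi
      rw [Function.update_of_ne hik]
      exact mem_Bset.mp hp.1 i (by omega)
    · intro b hb
      dsimp only
      rw [Function.update_idem]
      exact Function.update_eq_self _ _
    · intro p hp
      rw [Finset.mem_product] at hp
      have hp1 : p.1 ⟨k, hk⟩ = false := mem_Bset.mp hp.1 _ (by simp)
      refine Prod.ext ?_ ?_
      · simp only [Function.update_idem]
        rw [← hp1]
        exact Function.update_eq_self _ _
      · simp
    · intro b hb
      dsimp only
      rw [Function.update_idem, Function.update_eq_self]
  rw [key, Finset.sum_product]
  refine Finset.sum_congr rfl fun b hb => ?_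
  rw [Fintype.sum_bool]
  exact add_comm _ _

lemma sPoly_congr (g : MvPolynomial (Fin v) F) {r r' : Fin v → F} {j : ℕ}
    (h : ∀ i : Fin v, i.val < j → r i = r' i) :
    sPoly g r j = sPoly g r' j := by
  unfold sPoly
  refine Finset.sum_congr rfl fun b _ => ?_
  have : asg r b j = asg r' b j := by
    funext i
    simp only [asg]
    by_cases hi : i.val < j
    · rw [if_pos hi, if_pos hi, h i hi]
    · rw [if_neg hi, if_neg hi]
  rw [this]

lemma natDegree_aeval_asg_le (g : MvPolynomial (Fin v) F) (r : Fin v → F)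
    (b : Fin v → Bool) {j : ℕ} (hj : j < v) :
    (MvPolynomial.aeval (asg r b j) g).natDegree ≤ g.degreeOf ⟨j, hj⟩ := by
  conv_lhs => rw [g.as_sum]
  rw [map_sum]
  refine Polynomial.natDegree_sum_le_of_forall_le _ _ fun m hm => ?_
  rw [MvPolynomial.aeval_monomial, Polynomial.algebraMap_eq]
  refine le_trans (Polynomial.natDegree_C_mul_le _ _) ?_
  rw [Finsupp.prod]
  refine le_trans (Polynomial.natDegree_prod_le _ _) ?_
  have key : ∀ i ∈ m.support,
      (asg r b j i ^ m i).natDegree ≤ if i = (⟨j, hj⟩ : Fin v) then m i else 0 := by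
    intro i _
    by_cases hij : i = ⟨j, hj⟩
    · subst hij
      simp [asg, Polynomial.natDegree_X_pow]
    · have hne : i.val ≠ j := fun h => hij (Fin.ext h)
      by_cases h1 : i.val < j
      · simp [asg, h1, ← map_pow]
      · simp [asg, h1, hne, hij, ← map_pow]
  refine le_trans (Finset.sum_le_sum key) ?_
  rw [Finset.sum_ite_eq' m.support (⟨j, hj⟩ : Fin v) (fun i => m i)]
  split_ifs with h
  · exact MvPolynomial.monomial_le_degreeOf _ hm
  · exact Nat.zero_le _

lemma natDegree_sPoly_le (g : MvPolynomial (Fin v) F) (r : Fin v → F) {j : ℕ} (hj : j < v) :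
    (sPoly g r j).natDegree ≤ g.degreeOf ⟨j, hj⟩ :=
  Polynomial.natDegree_sum_le_of_forall_le _ _ fun b _ => natDegree_aeval_asg_le g r b hj

lemma sPoly_step (g : MvPolynomial (Fin v) F) (r : Fin v → F) {j : ℕ} (hj : j + 1 < v) :
    (sPoly g r j).eval (r ⟨j, by omega⟩)
      = (sPoly g r (j + 1)).eval 0 + (sPoly g r (j + 1)).eval 1 := by
  unfold sPoly
  rw [Polynomial.eval_finset_sum, Polynomial.eval_finset_sum, Polynomial.eval_finset_sum]
  simp only [eval_aeval_asg]
  rw [← Finset.sum_add_distrib]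
  have hL : ∀ b : Fin v → Bool, evp r b j (r ⟨j, by omega⟩)
      = fun i : Fin v => if i.val < j + 1 then r i else bF (b i) := by
    intro b; funext i; simp only [evp]
    by_cases h1 : i.val < j
    · rw [if_pos h1, if_pos (by omega : i.val < j + 1)]
    · rw [if_neg h1]
      by_cases h2 : i.val = j
      · have hi : i = ⟨j, by omega⟩ := Fin.ext h2
        rw [if_pos h2, if_pos (by omega : i.val < j + 1), hi]
      · rw [if_neg h2, if_neg (by omega : ¬ i.val < j + 1)]
  simp only [hL]
  rw [Bset_split (f := fun b => MvPolynomial.eval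
      (fun i : Fin v => if i.val < j + 1 then r i else bF (b i)) g) hj]
  refine Finset.sum_congr rfl fun b hb => ?_
  have hc : ∀ c : Bool, (fun i : Fin v =>
        if i.val < j + 1 then r i else bF (Function.update b ⟨j + 1, hj⟩ c i))
      = evp r b (j + 1) (bF c) := by
    intro c; funext i; simp only [evp]
    by_cases h1 : i.val < j + 1
    · rw [if_pos h1, if_pos h1]
    · rw [if_neg h1, if_neg h1]
      by_cases h2 : i.val = j + 1
      · have hi : i = ⟨j + 1, hj⟩ := Fin.ext h2
        subst hi
        rw [if_pos h2, Function.update_self]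
      · have hne : i ≠ ⟨j + 1, hj⟩ := fun h => h2 (by rw [h])
        rw [if_neg h2, Function.update_of_ne hne]
  rw [hc false, hc true]
  norm_num [bF]

lemma sPoly_base (g : MvPolynomial (Fin v) F) (r : Fin v → F) (hv : 0 < v) :
    (sPoly g r 0).eval 0 + (sPoly g r 0).eval 1
      = ∑ b : Fin v → Bool, MvPolynomial.eval (bvec b) g := by
  have hB0 : Bset v 0 = Finset.univ := by
    ext b; simp [Bset]
  have := Bset_split (f := fun b : Fin v → Bool => MvPolynomial.eval (bvec b) g) hv
  rw [hB0] at this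
  rw [this]
  unfold sPoly
  rw [Polynomial.eval_finset_sum, Polynomial.eval_finset_sum, ← Finset.sum_add_distrib]
  refine (Finset.sum_congr rfl fun b hb => ?_).symm
  simp only [eval_aeval_asg]
  have hc : ∀ c : Bool, bvec (Function.update b ⟨0, hv⟩ c) = evp r b 0 (bF c) := by
    intro c; funext i; simp only [evp, bvec]
    rw [if_neg (by omega : ¬ i.val < 0)]
    by_cases h2 : i.val = 0
    · have hi : i = ⟨0, hv⟩ := Fin.ext h2
      subst hi
      rw [if_pos h2, Function.update_self]
    · have hne : i ≠ ⟨0, hv⟩ := fun h => h2 (by rw [h])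
      rw [if_neg h2, Function.update_of_ne hne]
  rw [hc false, hc true]
  norm_num [bF]

lemma sPoly_last (g : MvPolynomial (Fin v) F) (r : Fin v → F) (hv : 0 < v) :
    (sPoly g r (v - 1)).eval (r ⟨v - 1, Nat.sub_lt hv Nat.one_pos⟩) = MvPolynomial.eval r g := by
  have hB : Bset v (v - 1 + 1) = {fun _ => false} := by
    ext b
    simp only [mem_Bset, Finset.mem_singleton]
    constructor
    · intro h; funext i; exact h i (by omega)
    · intro h i _; rw [h]
  unfold sPoly
  rw [hB, Finset.sum_singleton, eval_aeval_asg]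
  have : evp r (fun _ => false) (v - 1) (r ⟨v - 1, by omega⟩) = r := by
    funext i
    simp only [evp]
    by_cases h1 : i.val < v - 1
    · rw [if_pos h1]
    · have h2 : i.val = v - 1 := by omega
      have hi : i = ⟨v - 1, by omega⟩ := Fin.ext h2
      rw [if_neg h1, if_pos h2, hi]
  rw [this]


open Classical in
/-- The event that the prover's round-`j` polynomial differs from the honest one
but agrees with it at the random point `r j`. -/
noncomputable def badSet [Fintype F] (g : MvPolynomial (Fin v) F)
    (P : (j : Fin v) → (Fin j.val → F) → Polynomial F) (j : Fin v) :
    Finset (Fin v → F) :=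
  Finset.univ.filter (fun r : Fin v → F =>
    P j (prefixOf r j) - sPoly g r j.val ≠ 0 ∧
    (P j (prefixOf r j) - sPoly g r j.val).eval (r j) = 0)

lemma mem_badSet [Fintype F] {g : MvPolynomial (Fin v) F}
    {P : (j : Fin v) → (Fin j.val → F) → Polynomial F} {j : Fin v} {r : Fin v → F} :
    r ∈ badSet g P j ↔
      (P j (prefixOf r j) - sPoly g r j.val ≠ 0 ∧
        (P j (prefixOf r j) - sPoly g r j.val).eval (r j) = 0) := by
  classical
  rw [badSet, Finset.mem_filter]
  simp

end SCAux

open SCAux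

/-- Soundness of the sum-check protocol: if a prover strategy `P` (assigning to each
round `j` and each prefix of verifier randomness a univariate polynomial of degree
at most `d j`) starts from an incorrect claimed sum `H`, then the fraction of
random vectors `r ∈ F^v` passing all of the verifier's consistency checks (the
round-by-round checks and the final evaluation check against `g`) is at most
`(Σ_j d j) / |F|`. -/
theorem sumcheck_soundness (F : Type*) [Field F] [Fintype F] [DecidableEq F]
    (v : ℕ) (hv : 0 < v)
    (g : MvPolynomial (Fin v) F) (d : Fin v → ℕ)
    (hdeg : ∀ j : Fin v, g.degreeOf j ≤ d j)
    (H : F) (hH : H ≠ ∑ b : Fin v → Bool, MvPolynomial.eval (bvec b) g)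
    (P : (j : Fin v) → (Fin j.val → F) → Polynomial F)
    (hPdeg : ∀ (j : Fin v) (ρ : Fin j.val → F), (P j ρ).natDegree ≤ d j)
    (hfirst : ∀ ρ : Fin (0 : ℕ) → F,
        (P ⟨0, hv⟩ ρ).eval 0 + (P ⟨0, hv⟩ ρ).eval 1 = H) :
    (Finset.univ.filter (fun r : Fin v → F =>
        (∀ j : Fin v, 0 < j.val →
            (P j (prefixOf r j)).eval 0 + (P j (prefixOf r j)).eval 1
              = (P ⟨j.val - 1, lt_of_le_of_lt (Nat.sub_le _ _) j.2⟩
                    (prefixOf r ⟨j.val - 1, lt_of_le_of_lt (Nat.sub_le _ _) j.2⟩)).eval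
                  (r ⟨j.val - 1, lt_of_le_of_lt (Nat.sub_le _ _) j.2⟩)) ∧
        (P ⟨v - 1, by omega⟩ (prefixOf r ⟨v - 1, by omega⟩)).eval (r ⟨v - 1, by omega⟩)
          = MvPolynomial.eval r g)).card * Fintype.card F
      ≤ (∑ j : Fin v, d j) * Fintype.card F ^ v := by
    classical
  -- Step 1: every passing r lies in some badSet
  have hsub : ∀ r : Fin v → F,
      ((∀ j : Fin v, 0 < j.val →
            (P j (prefixOf r j)).eval 0 + (P j (prefixOf r j)).eval 1
              = (P ⟨j.val - 1, lt_of_le_of_lt (Nat.sub_le _ _) j.2⟩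
                    (prefixOf r ⟨j.val - 1, lt_of_le_of_lt (Nat.sub_le _ _) j.2⟩)).eval
                  (r ⟨j.val - 1, lt_of_le_of_lt (Nat.sub_le _ _) j.2⟩)) ∧
        (P ⟨v - 1, by omega⟩ (prefixOf r ⟨v - 1, by omega⟩)).eval (r ⟨v - 1, by omega⟩)
          = MvPolynomial.eval r g) → ∃ j : Fin v, r ∈ badSet g P j := by
    rintro r ⟨hchk, hfin⟩
    have hrec : ∀ n : ℕ, ∀ j : Fin v, v - j.val ≤ n →
        P j (prefixOf r j) ≠ sPoly g r j.val → ∃ k : Fin v, r ∈ badSet g P k := by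
      intro n
      induction n with
      | zero =>
        intro j h _
        have := j.2
        omega
      | succ n ih =>
        intro j hle hne
        by_cases heq : (P j (prefixOf r j)).eval (r j) = (sPoly g r j.val).eval (r j)
        · refine ⟨j, mem_badSet.mpr ?_⟩
          exact ⟨sub_ne_zero.mpr hne, by rw [Polynomial.eval_sub, heq, sub_self]⟩
        · by_cases hlast : j.val = v - 1
          · exfalso
            apply heq
            have hj : j = ⟨v - 1, Nat.sub_lt hv Nat.one_pos⟩ := Fin.ext hlast
            rw [hj]
            exact hfin.trans (sPoly_last g r hv).symm
          · have hj1 : j.val + 1 < v := by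
              have := j.2
              omega
            have hchk' := hchk ⟨j.val + 1, hj1⟩ (by simp)
            have hB := sPoly_step g r hj1
            have hne' : P ⟨j.val + 1, hj1⟩ (prefixOf r ⟨j.val + 1, hj1⟩)
                ≠ sPoly g r (j.val + 1) := by
              intro h
              apply heq
              have e1 : (P ⟨j.val + 1, hj1⟩ (prefixOf r ⟨j.val + 1, hj1⟩)).eval 0
                  + (P ⟨j.val + 1, hj1⟩ (prefixOf r ⟨j.val + 1, hj1⟩)).eval 1
                  = (P j (prefixOf r j)).eval (r j) := hchk'
              rw [h] at e1
              rw [← e1, ← hB]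
            exact ih ⟨j.val + 1, hj1⟩ (show v - (j.val + 1) ≤ n by omega) hne'
    have start : P ⟨0, hv⟩ (prefixOf r ⟨0, hv⟩) ≠ sPoly g r 0 := by
      intro h
      apply hH
      rw [← sPoly_base g r hv, ← hfirst (prefixOf r ⟨0, hv⟩), h]
    exact hrec v ⟨0, hv⟩ (by omega) start
  -- Step 2: counting each bad set
  have hAcard : ∀ j : Fin v, (badSet g P j).card ≤ d j * Fintype.card F ^ (v - 1) := by
    intro j
    refine le_trans (Finset.card_le_mul_card_image
        (f := fun (r : Fin v → F) (i : {i : Fin v // i ≠ j}) => r i.1)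
        (badSet g P j) (d j) ?_) ?_
    · intro rho hrho
      obtain ⟨r₀, hr₀, hfr₀⟩ := Finset.mem_image.mp hrho
      have hr₀' := mem_badSet.mp hr₀
      set q := P j (prefixOf r₀ j) - sPoly g r₀ j.val with hq
      have hqne : q ≠ 0 := hr₀'.1
      refine le_trans (Finset.card_le_card_of_injOn (t := q.roots.toFinset)
        (fun r => r j) ?_ ?_) ?_
      · intro r hr
        rw [Finset.mem_coe, Finset.mem_filter] at hr
        obtain ⟨hrA, hrrho⟩ := hr
        have hragree : ∀ i : Fin v, i ≠ j → r i = r₀ i := by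
          intro i hij
          calc r i = rho ⟨i, hij⟩ := congrFun hrrho ⟨i, hij⟩
            _ = r₀ i := (congrFun hfr₀ ⟨i, hij⟩).symm
        have hpre : prefixOf r j = prefixOf r₀ j := by
          funext i
          refine hragree _ (fun h => ?_)
          have h2 := congrArg Fin.val h
          simp only [] at h2
          have := i.2
          omega
        have hsp : sPoly g r j.val = sPoly g r₀ j.val := by
          refine sPoly_congr g (fun i hi => hragree i (fun h => ?_))
          rw [h] at hi
          omega
        have hrA' := mem_badSet.mp hrA
        rw [Finset.mem_coe, Multiset.mem_toFinset, Polynomial.mem_roots hqne]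
        show q.eval (r j) = 0
        rw [hq, ← hpre, ← hsp]
        exact hrA'.2
      · intro r hr r' hr' hjj
        rw [Finset.mem_coe, Finset.mem_filter] at hr hr'
        funext i
        by_cases hij : i = j
        · subst hij; exact hjj
        · calc r i = rho ⟨i, hij⟩ := congrFun hr.2 ⟨i, hij⟩
            _ = r' i := (congrFun hr'.2 ⟨i, hij⟩).symm
      · calc q.roots.toFinset.card ≤ Multiset.card q.roots := Multiset.toFinset_card_le _
          _ ≤ q.natDegree := Polynomial.card_roots' q
          _ ≤ d j := by
              refine le_trans (Polynomial.natDegree_sub_le _ _) (max_le (hPdeg j _) ?_)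
              refine le_trans (natDegree_sPoly_le g r₀ j.2) ?_
              have hj : (⟨j.val, j.2⟩ : Fin v) = j := Fin.ext rfl
              rw [hj]
              exact hdeg j
    · refine Nat.mul_le_mul_left _ ?_
      refine le_trans (Finset.card_le_univ _) ?_
      have hcompl : Fintype.card {i : Fin v // i ≠ j} = v - 1 := by
        have h1 := Fintype.card_subtype_compl (fun i : Fin v => i = j)
        rw [Fintype.card_subtype_eq, Fintype.card_fin] at h1
        calc Fintype.card {i : Fin v // i ≠ j}
            = Fintype.card {i : Fin v // ¬i = j} :=
              Fintype.card_congr (Equiv.subtypeEquivRight (by simp))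
          _ = v - 1 := h1
      rw [Fintype.card_fun, hcompl]
  -- Assemble
  have hstep : (Finset.univ.biUnion (badSet g P)).card * Fintype.card F
      ≤ (∑ j : Fin v, d j) * Fintype.card F ^ v := by
    calc (Finset.univ.biUnion (badSet g P)).card * Fintype.card F
        ≤ (∑ j : Fin v, (badSet g P j).card) * Fintype.card F :=
          Nat.mul_le_mul_right _ Finset.card_biUnion_le
      _ ≤ (∑ j : Fin v, d j * Fintype.card F ^ (v - 1)) * Fintype.card F :=
          Nat.mul_le_mul_right _ (Finset.sum_le_sum fun j _ => hAcard j)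
      _ = (∑ j : Fin v, d j) * Fintype.card F ^ v := by
          rw [← Finset.sum_mul, mul_assoc, ← pow_succ, Nat.sub_add_cancel hv]
  refine le_trans (Nat.mul_le_mul_right _ (Finset.card_le_card fun r hr => ?_)) hstep
  rw [Finset.mem_filter] at hr
  obtain ⟨j, hj⟩ := hsub r hr.2
  exact Finset.mem_biUnion.mpr ⟨j, Finset.mem_univ _, hj⟩
end

section
/- Let F be a field, and let V_i : {0,1}^{s_i} → F, V_{i+1} : {0,1}^{s_{i+1}} → F, add_i, mult_i : {0,1}^{s_i + 2 s_{i+1}} → {0,1} be functions such that for all p ∈ {0,1}^{s_i}: V_i(p) = Σ_{(ω_1, ω_2) ∈ {0,1}^{s_{i+1}} × {0,1}^{s_{i+1}}} [ add_i(p, ω_1, ω_2)·(V_{i+1}(ω_1) + V_{i+1}(ω_2)) + mult_i(p, ω_1, ω_2)·V_{i+1}(ω_1)·V_{i+1}(ω_2) ]. Then for every z ∈ F^{s_i}: Ṽ_i(z) = Σ_{(p, ω_1, ω_2) ∈ {0,1}^{s_i + 2 s_{i+1}}} β_{s_i}(z, p)·( ãdd_i(p, ω_1, ω_2)·(Ṽ_{i+1}(ω_1)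 + Ṽ_{i+1}(ω_2)) + m̃ult_i(p, ω_1, ω_2)·Ṽ_{i+1}(ω_1)·Ṽ_{i+1}(ω_2) ), where ãdd_i, m̃ult_i, Ṽ_i, Ṽ_{i+1} denote multilinear extensions. -/
open MvPolynomial

/-- `β_s(z, p) = ∏_j ((1-z_j)(1-p_j) + z_j p_j)`, as a function of `z, p ∈ F^s`. -/
def betaFn {F : Type*} [Field F] {ι : Type*} [Fintype ι] (z p : ι → F) : F :=
  ∏ j, ((1 - z j) * (1 - p j) + z j * p j)

/-- Multilinear Lagrange interpolation on the boolean hypercube. -/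
lemma mle_interp {F : Type*} [Field F] {n : ℕ}
    (P : MvPolynomial (Fin n) F) (hml : ∀ x, P.degreeOf x ≤ 1) (z : Fin n → F) :
    MvPolynomial.eval z P
      = ∑ p : Fin n → Bool, betaFn z (bvec p) * MvPolynomial.eval (bvec p) P := by
  rw [MvPolynomial.eval_eq']
  simp only [MvPolynomial.eval_eq', Finset.mul_sum]
  rw [Finset.sum_comm]
  refine Finset.sum_congr rfl fun d hd => ?_
  have hd1 : ∀ x, d x ≤ 1 := fun x =>
    le_trans (MvPolynomial.monomial_le_degreeOf x hd) (hml x)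
  have key : ∑ p : Fin n → Bool,
      betaFn z (bvec p) * ∏ x, (bvec p x) ^ d x
      = ∏ x, z x ^ d x := by
    unfold betaFn
    simp only [bvec, ← Finset.prod_mul_distrib]
    rw [← Fintype.prod_sum fun x (b : Bool) =>
      ((1 - z x) * (1 - bF b) + z x * bF b) * (bF b : F) ^ d x]
    refine Finset.prod_congr rfl fun x _ => ?_
    have := hd1 x
    interval_cases h : d x <;>
      simp [Fintype.sum_bool, bF] <;> ring
  calc MvPolynomial.coeff d P * ∏ x, z x ^ d x
      = MvPolynomial.coeff d P *
        ∑ p : Fin n → Bool, betaFn z (bvec p) * ∏ x, (bvec p x) ^ d x := by rw [key]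
    _ = ∑ p : Fin n → Bool,
        betaFn z (bvec p) * (MvPolynomial.coeff d P * ∏ x, (bvec p x) ^ d x) := by
        rw [Finset.mul_sum]; refine Finset.sum_congr rfl fun p _ => ?_; ring

/-- The GKR per-layer identity: if `V_i` is obtained from `V_{i+1}` via the wiring
predicates `add_i` and `mult_i` of a layered fan-in-2 arithmetic circuit, then for
every `z ∈ F^{s_i}`,
`Ṽ_i(z) = Σ_{(p,ω₁,ω₂) ∈ {0,1}^{s_i + 2 s_{i+1}}} β_{s_i}(z,p) ·
  (ãdd_i(p,ω₁,ω₂)·(Ṽ_{i+1}(ω₁)+Ṽ_{i+1}(ω₂)) + m̃ult_i(p,ω₁,ω₂)·Ṽ_{i+1}(ω₁)·Ṽ_{i+1}(ω₂))`,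
where tildes denote multilinear extensions. -/
theorem gkr_layer_identity (F : Type*) [Field F] (si si1 : ℕ)
    (Vi : (Fin si → Bool) → F) (Vi1 : (Fin si1 → Bool) → F)
    (addg multg : (Fin si → Bool) → (Fin si1 → Bool) → (Fin si1 → Bool) → Bool)
    (hwire : ∀ p : Fin si → Bool,
        Vi p = ∑ w1 : Fin si1 → Bool, ∑ w2 : Fin si1 → Bool,
          (bF (addg p w1 w2) * (Vi1 w1 + Vi1 w2)
            + bF (multg p w1 w2) * (Vi1 w1 * Vi1 w2)))
    (Pi : MvPolynomial (Fin si) F)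
    (hPiml : ∀ x, Pi.degreeOf x ≤ 1)
    (hPi : ∀ p : Fin si → Bool, MvPolynomial.eval (bvec p) Pi = Vi p)
    (Pi1 : MvPolynomial (Fin si1) F)
    (hPi1ml : ∀ x, Pi1.degreeOf x ≤ 1)
    (hPi1 : ∀ p : Fin si1 → Bool, MvPolynomial.eval (bvec p) Pi1 = Vi1 p)
    (Padd : MvPolynomial (Fin si ⊕ (Fin si1 ⊕ Fin si1)) F)
    (hPaddml : ∀ x, Padd.degreeOf x ≤ 1)
    (hPadd : ∀ (p : Fin si → Bool) (w1 w2 : Fin si1 → Bool),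
        MvPolynomial.eval (Sum.elim (bvec p) (Sum.elim (bvec w1) (bvec w2))) Padd
          = bF (addg p w1 w2))
    (Pmult : MvPolynomial (Fin si ⊕ (Fin si1 ⊕ Fin si1)) F)
    (hPmultml : ∀ x, Pmult.degreeOf x ≤ 1)
    (hPmult : ∀ (p : Fin si → Bool) (w1 w2 : Fin si1 → Bool),
        MvPolynomial.eval (Sum.elim (bvec p) (Sum.elim (bvec w1) (bvec w2))) Pmult
          = bF (multg p w1 w2))
    (z : Fin si → F) :
    MvPolynomial.eval z Pi
      = ∑ p : Fin si → Bool, ∑ w1 : Fin si1 → Bool, ∑ w2 : Fin si1 → Bool,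
          betaFn z (bvec p) *
            (MvPolynomial.eval (Sum.elim (bvec p) (Sum.elim (bvec w1) (bvec w2))) Padd *
                (MvPolynomial.eval (bvec w1) Pi1 + MvPolynomial.eval (bvec w2) Pi1)
              + MvPolynomial.eval (Sum.elim (bvec p) (Sum.elim (bvec w1) (bvec w2))) Pmult *
                  (MvPolynomial.eval (bvec w1) Pi1 * MvPolynomial.eval (bvec w2) Pi1)) := by
  rw [mle_interp Pi hPiml z]
  refine Finset.sum_congr rfl fun p _ => ?_
  rw [hPi p, hwire p, Finset.mul_sum]
  refine Finset.sum_congr rfl fun w1 _ => ?_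
  rw [Finset.mul_sum]
  refine Finset.sum_congr rfl fun w2 _ => ?_
  rw [hPadd, hPmult, hPi1, hPi1]
end

section
/- Let F be a field, let b, s_i, s_{i+1} be natural numbers, and let V*_i : {0,1}^{s_i} × {0,1}^b → F, V*_{i+1} : {0,1}^{s_{i+1}} × {0,1}^b → F, and add_i, mult_i : {0,1}^{s_i + 2 s_{i+1}} → {0,1} be functions such that for all (p_1, p_2) ∈ {0,1}^{s_i} × {0,1}^b: V*_i(p_1, p_2) = Σ_{(ω_1, γ_1) ∈ {0,1}^{s_{i+1}} × {0,1}^{s_{i+1}}} [ add_i(p_1, ω_1, γ_1)·(V*_{i+1}(ω_1, p_2) + V*_{i+1}(γ_1, p_2)) + mult_i(p_1, ω_1, γ_1)·V*_{i+1}(ω_1, p_2)·V*_{i+1}(γ_1, p_2) ]. Then for every z ∈ F^{s_i + b}: Ṽ*_i(z) = Σ_{(p_1, p_2, ω_1, γ_1) ∈ {0,1}^{s_i} × {0,1}^b × {0,1}^{s_{i+1}} × {0,1}^{s_{i+1}}} β_{s_i + b}(z, (p_1, p_2))·( ãdd_i(p_1, ω_1, γ_1)·(Ṽ*_{i+1}(ω_1,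 p_2) + Ṽ*_{i+1}(γ_1, p_2)) + m̃ult_i(p_1, ω_1, γ_1)·Ṽ*_{i+1}(ω_1, p_2)·Ṽ*_{i+1}(γ_1, p_2) ), where tildes denote multilinear extensions. -/
open MvPolynomial

lemma interp {F : Type*} [Field F] {ι : Type*} [Fintype ι] [DecidableEq ι]
    (P : MvPolynomial ι F) (hml : ∀ x, P.degreeOf x ≤ 1) (z : ι → F) :
    MvPolynomial.eval z P = ∑ p : ι → Bool, betaFn z (bvec p) * MvPolynomial.eval (bvec p) P := by
  conv_lhs => rw [P.as_sum]
  conv_rhs => rw [show (fun p : ι → Bool => betaFn z (bvec p) * MvPolynomial.eval (bvec p) P) = fun p => betaFn z (bvec p) * MvPolynomial.eval (bvec p) (∑ d ∈ P.support, MvPolynomial.monomial d (P.coeff d)) from by rw [← P.as_sum]]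
  simp only [map_sum, Finset.mul_sum]
  rw [Finset.sum_comm]
  refine Finset.sum_congr rfl fun d hd => ?_
  have hd1 : ∀ j, d j ≤ 1 := fun j => le_trans (MvPolynomial.monomial_le_degreeOf j hd) (hml j)
  simp only [eval_monomial, betaFn, bvec]
  have key : ∀ p : ι → Bool,
      (∏ j, ((1 - z j) * (1 - bF (p j)) + z j * bF (p j))) *
        (P.coeff d * d.prod fun j e => bF (p j) ^ e)
      = P.coeff d * ∏ j, (((1 - z j) * (1 - bF (p j)) + z j * bF (p j)) * bF (p j) ^ d j) := by
    intro p
    rw [Finsupp.prod_fintype _ _ (fun j => pow_zero _), Finset.prod_mul_distrib]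
    ring
  simp only [key, ← Finset.mul_sum]
  congr 1
  rw [← Fintype.prod_sum (fun j (b : Bool) => ((1 - z j) * (1 - bF b) + z j * bF b) * bF b ^ d j)]
  rw [Finsupp.prod_fintype _ _ (fun j => pow_zero _)]
  refine Finset.prod_congr rfl fun j _ => ?_
  have hj := hd1 j
  interval_cases h : d j <;> simp [bF]

/-- The per-layer identity for a data-parallel super-circuit consisting of `2^b`
disjoint copies of a circuit with wiring predicates `add_i`, `mult_i`:
a gate `(p₁,p₂)` (gate `p₁` in copy `p₂`) at layer `i` is connected to gates
`(ω₁,p₂)` and `(γ₁,p₂)` of the same copy. Then for every `z ∈ F^{s_i + b}`,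
`Ṽ*_i(z) = Σ_{(p₁,p₂,ω₁,γ₁)} β_{s_i+b}(z,(p₁,p₂)) ·
  (ãdd_i(p₁,ω₁,γ₁)·(Ṽ*_{i+1}(ω₁,p₂)+Ṽ*_{i+1}(γ₁,p₂))
    + m̃ult_i(p₁,ω₁,γ₁)·Ṽ*_{i+1}(ω₁,p₂)·Ṽ*_{i+1}(γ₁,p₂))`. -/
theorem dataparallel_layer_identity (F : Type*) [Field F] (b si si1 : ℕ)
    (Vi : (Fin si ⊕ Fin b → Bool) → F)
    (Vi1 : (Fin si1 ⊕ Fin b → Bool) → F)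
    (addg multg : (Fin si → Bool) → (Fin si1 → Bool) → (Fin si1 → Bool) → Bool)
    (hwire : ∀ (p1 : Fin si → Bool) (p2 : Fin b → Bool),
        Vi (Sum.elim p1 p2)
          = ∑ w1 : Fin si1 → Bool, ∑ g1 : Fin si1 → Bool,
              (bF (addg p1 w1 g1) * (Vi1 (Sum.elim w1 p2) + Vi1 (Sum.elim g1 p2))
                + bF (multg p1 w1 g1) * (Vi1 (Sum.elim w1 p2) * Vi1 (Sum.elim g1 p2))))
    (Pi : MvPolynomial (Fin si ⊕ Fin b) F)
    (hPiml : ∀ x, Pi.degreeOf x ≤ 1)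
    (hPi : ∀ p : Fin si ⊕ Fin b → Bool, MvPolynomial.eval (bvec p) Pi = Vi p)
    (Pi1 : MvPolynomial (Fin si1 ⊕ Fin b) F)
    (hPi1ml : ∀ x, Pi1.degreeOf x ≤ 1)
    (hPi1 : ∀ p : Fin si1 ⊕ Fin b → Bool, MvPolynomial.eval (bvec p) Pi1 = Vi1 p)
    (Padd : MvPolynomial (Fin si ⊕ (Fin si1 ⊕ Fin si1)) F)
    (hPaddml : ∀ x, Padd.degreeOf x ≤ 1)
    (hPadd : ∀ (p1 : Fin si → Bool) (w1 g1 : Fin si1 → Bool),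
        MvPolynomial.eval (Sum.elim (bvec p1) (Sum.elim (bvec w1) (bvec g1))) Padd
          = bF (addg p1 w1 g1))
    (Pmult : MvPolynomial (Fin si ⊕ (Fin si1 ⊕ Fin si1)) F)
    (hPmultml : ∀ x, Pmult.degreeOf x ≤ 1)
    (hPmult : ∀ (p1 : Fin si → Bool) (w1 g1 : Fin si1 → Bool),
        MvPolynomial.eval (Sum.elim (bvec p1) (Sum.elim (bvec w1) (bvec g1))) Pmult
          = bF (multg p1 w1 g1))
    (z : Fin si ⊕ Fin b → F) :
    MvPolynomial.eval z Pi
      = ∑ p1 : Fin si → Bool, ∑ p2 : Fin b → Bool,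
          ∑ w1 : Fin si1 → Bool, ∑ g1 : Fin si1 → Bool,
            betaFn z (bvec (Sum.elim p1 p2)) *
              (MvPolynomial.eval (Sum.elim (bvec p1) (Sum.elim (bvec w1) (bvec g1))) Padd *
                  (MvPolynomial.eval (bvec (Sum.elim w1 p2)) Pi1
                    + MvPolynomial.eval (bvec (Sum.elim g1 p2)) Pi1)
                + MvPolynomial.eval (Sum.elim (bvec p1) (Sum.elim (bvec w1) (bvec g1))) Pmult *
                    (MvPolynomial.eval (bvec (Sum.elim w1 p2)) Pi1
                      * MvPolynomial.eval (bvec (Sum.elim g1 p2)) Pi1)) := by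
  rw [interp Pi hPiml z, ← Fintype.sum_prod_type']
  refine Fintype.sum_equiv (Equiv.sumArrowEquivProdArrow (Fin si) (Fin b) Bool) _ _ fun p => ?_
  simp only [Equiv.sumArrowEquivProdArrow, Equiv.coe_fn_mk]
  rw [hPi, show Vi p = Vi (Sum.elim (p ∘ Sum.inl) (p ∘ Sum.inr)) from by
    rw [Sum.elim_comp_inl_inr], hwire]
  simp only [Finset.mul_sum]
  refine Finset.sum_congr rfl fun w1 _ => Finset.sum_congr rfl fun g1 _ => ?_
  rw [hPadd, hPmult, hPi1, hPi1, Sum.elim_comp_inl_inr]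
end

section
/- Let F be a field, k ≥ 0, n = 2^k, and let A, B : {0,1}^k × {0,1}^k → F be functions (representing n × n matrices indexed by bit strings). Define D : {0,1}^k × {0,1}^k → F by D(i, j) = Σ_{l ∈ {0,1}^k} A(i, l)·B(l, j), i.e., D represents the matrix product A·B. Then for all (p_1, p_2) ∈ F^k × F^k: D̃(p_1, p_2) = Σ_{p_3 ∈ {0,1}^k} Ã(p_1, p_3)·B̃(p_3, p_2), where Ã, B̃, D̃ denote multilinear extensions. -/
open MvPolynomial

section Aux

variable {F : Type*} [Field F] {ι : Type*} [Fintype ι] [DecidableEq ι]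

/-- The Lagrange-basis (equality) weight for the Boolean hypercube. -/
noncomputable def eqF (p : ι → F) (b : ι → Bool) : F :=
  ∏ i, if b i then p i else 1 - p i

lemma mle_eval (P : MvPolynomial ι F) (hP : ∀ x, P.degreeOf x ≤ 1) (p : ι → F) :
    MvPolynomial.eval p P = ∑ b : ι → Bool, eqF p b * MvPolynomial.eval (bvec b) P := by
  rw [P.as_sum]
  simp only [map_sum, Finset.mul_sum]
  rw [Finset.sum_comm]
  refine Finset.sum_congr rfl fun m hm => ?_
  simp only [eval_monomial, Finsupp.prod_pow, bvec]
  have key : ∀ b : ι → Bool,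
      eqF p b * (coeff m P * ∏ i, bF (b i) ^ m i)
        = coeff m P * ∏ i, ((if b i then p i else 1 - p i) * bF (b i) ^ m i) := by
    intro b
    rw [Finset.prod_mul_distrib]
    unfold eqF; ring
  calc coeff m P * ∏ a, p a ^ m a
      = coeff m P * ∏ i, ∑ t : Bool, (if t then p i else 1 - p i) * bF t ^ m i := by
        congr 1
        refine Finset.prod_congr rfl fun i _ => ?_
        have hmi : m i ≤ 1 := le_trans (MvPolynomial.monomial_le_degreeOf i hm) (hP i)
        interval_cases h : m i <;> simp [bF, Fintype.sum_bool]
    _ = coeff m P * ∑ b : ι → Bool, ∏ i, ((if b i then p i else 1 - p i) * bF (b i) ^ m i) := by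
        rw [Fintype.prod_sum]
    _ = ∑ b : ι → Bool, eqF p b * (coeff m P * ∏ i, bF (b i) ^ m i) := by
        rw [Finset.mul_sum]
        exact Finset.sum_congr rfl fun b _ => (key b).symm

omit [DecidableEq ι] in
lemma eqF_bvec (c b : ι → Bool) : eqF (bvec c : ι → F) b = if b = c then 1 else 0 := by
  unfold eqF bvec bF
  by_cases h : b = c
  · subst h
    simp only [if_pos rfl]
    refine Finset.prod_eq_one fun i _ => by cases b i <;> simp
  · rw [if_neg h]
    obtain ⟨i, hi⟩ : ∃ i, b i ≠ c i := Function.ne_iff.mp h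
    refine Finset.prod_eq_zero (Finset.mem_univ i) ?_
    cases hb : b i <;> cases hc : c i <;> simp_all

lemma sum_eqF_bvec (c : ι → Bool) (g : (ι → Bool) → F) :
    ∑ b : ι → Bool, eqF (bvec c : ι → F) b * g b = g c := by
  simp [eqF_bvec, Finset.sum_ite_eq]

end Aux

section Sum

variable {F : Type*} [Field F] {k : ℕ}

lemma bvec_elim (i j : Fin k → Bool) :
    (Sum.elim (bvec i) (bvec j) : Fin k ⊕ Fin k → F) = bvec (Sum.elim i j) := by
  funext x; cases x <;> rfl

lemma sum_split [AddCommMonoid M] (f : (Fin k ⊕ Fin k → Bool) → M) :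
    ∑ b : Fin k ⊕ Fin k → Bool, f b
      = ∑ i : Fin k → Bool, ∑ j : Fin k → Bool, f (Sum.elim i j) := by
  calc ∑ b : Fin k ⊕ Fin k → Bool, f b
      = ∑ p : (Fin k → Bool) × (Fin k → Bool), f (Sum.elim p.1 p.2) :=
        Fintype.sum_equiv (Equiv.sumArrowEquivProdArrow _ _ _) _ _
          (fun b => congrArg f (funext fun x => by cases x <;> rfl))
    _ = ∑ i : Fin k → Bool, ∑ j : Fin k → Bool, f (Sum.elim i j) :=
        Fintype.sum_prod_type _

lemma eqF_elim (p q : Fin k → F) (i j : Fin k → Bool) :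
    eqF (Sum.elim p q) (Sum.elim i j) = eqF p i * eqF q j := by
  unfold eqF
  rw [Fintype.prod_sum_type]
  rfl

/-- Evaluation of a multilinear polynomial in split form. -/
lemma mle_eval_split (P : MvPolynomial (Fin k ⊕ Fin k) F)
    (hml : ∀ x, P.degreeOf x ≤ 1) (p q : Fin k → F) :
    MvPolynomial.eval (Sum.elim p q) P
      = ∑ i : Fin k → Bool, ∑ j : Fin k → Bool,
          eqF p i * eqF q j *
            MvPolynomial.eval (Sum.elim (bvec i) (bvec j)) P := by
  rw [mle_eval P hml, sum_split]
  refine Finset.sum_congr rfl fun i _ => Finset.sum_congr rfl fun j _ => ?_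
  rw [eqF_elim, bvec_elim]

end Sum

/-- The matrix-multiplication identity for multilinear extensions: if
`D(i,j) = Σ_l A(i,l)·B(l,j)` (matrices indexed by bit strings of length `k`,
so `n = 2^k`), then for all `p₁, p₂ ∈ F^k`,
`D̃(p₁,p₂) = Σ_{p₃ ∈ {0,1}^k} Ã(p₁,p₃)·B̃(p₃,p₂)`. -/
theorem matmult_mle_identity (F : Type*) [Field F] (k : ℕ)
    (A B D : (Fin k → Bool) → (Fin k → Bool) → F)
    (hD : ∀ i j : Fin k → Bool, D i j = ∑ l : Fin k → Bool, A i l * B l j)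
    (PA : MvPolynomial (Fin k ⊕ Fin k) F)
    (hPAml : ∀ x, PA.degreeOf x ≤ 1)
    (hPA : ∀ i j : Fin k → Bool,
        MvPolynomial.eval (Sum.elim (bvec i) (bvec j)) PA = A i j)
    (PB : MvPolynomial (Fin k ⊕ Fin k) F)
    (hPBml : ∀ x, PB.degreeOf x ≤ 1)
    (hPB : ∀ i j : Fin k → Bool,
        MvPolynomial.eval (Sum.elim (bvec i) (bvec j)) PB = B i j)
    (PD : MvPolynomial (Fin k ⊕ Fin k) F)
    (hPDml : ∀ x, PD.degreeOf x ≤ 1)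
    (hPD : ∀ i j : Fin k → Bool,
        MvPolynomial.eval (Sum.elim (bvec i) (bvec j)) PD = D i j)
    (p1 p2 : Fin k → F) :
    MvPolynomial.eval (Sum.elim p1 p2) PD
      = ∑ p3 : Fin k → Bool,
          MvPolynomial.eval (Sum.elim p1 (bvec p3)) PA *
            MvPolynomial.eval (Sum.elim (bvec p3) p2) PB := by
  have hAev : ∀ p3 : Fin k → Bool,
      MvPolynomial.eval (Sum.elim p1 (bvec p3)) PA
        = ∑ i : Fin k → Bool, eqF p1 i * A i p3 := by
    intro p3
    rw [mle_eval_split PA hPAml]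
    refine Finset.sum_congr rfl fun i _ => ?_
    calc ∑ j : Fin k → Bool, eqF p1 i * eqF (bvec p3) j *
            MvPolynomial.eval (Sum.elim (bvec i) (bvec j)) PA
        = ∑ j : Fin k → Bool, eqF (bvec p3 : (Fin k → F)) j * (eqF p1 i * A i j) := by
          refine Finset.sum_congr rfl fun j _ => by rw [hPA]; ring
      _ = eqF p1 i * A i p3 := sum_eqF_bvec _ _
  have hBev : ∀ p3 : Fin k → Bool,
      MvPolynomial.eval (Sum.elim (bvec p3) p2) PB
        = ∑ j : Fin k → Bool, eqF p2 j * B p3 j := by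
    intro p3
    rw [mle_eval_split PB hPBml, Finset.sum_comm]
    refine Finset.sum_congr rfl fun j _ => ?_
    calc ∑ i : Fin k → Bool, eqF (bvec p3) i * eqF p2 j *
            MvPolynomial.eval (Sum.elim (bvec i) (bvec j)) PB
        = ∑ i : Fin k → Bool, eqF (bvec p3 : (Fin k → F)) i * (eqF p2 j * B i j) := by
          refine Finset.sum_congr rfl fun i _ => by rw [hPB]; ring
      _ = eqF p2 j * B p3 j := sum_eqF_bvec _ _
  rw [mle_eval_split PD hPDml]
  calc ∑ i : Fin k → Bool, ∑ j : Fin k → Bool, eqF p1 i * eqF p2 j *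
          MvPolynomial.eval (Sum.elim (bvec i) (bvec j)) PD
      = ∑ i : Fin k → Bool, ∑ j : Fin k → Bool, ∑ l : Fin k → Bool,
          (eqF p1 i * A i l) * (eqF p2 j * B l j) := by
        refine Finset.sum_congr rfl fun i _ => Finset.sum_congr rfl fun j _ => ?_
        rw [hPD, hD, Finset.mul_sum]
        exact Finset.sum_congr rfl fun l _ => by ring
    _ = ∑ i : Fin k → Bool, ∑ l : Fin k → Bool, ∑ j : Fin k → Bool,
          (eqF p1 i * A i l) * (eqF p2 j * B l j) :=
        Finset.sum_congr rfl fun i _ => Finset.sum_comm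
    _ = ∑ l : Fin k → Bool, ∑ i : Fin k → Bool, ∑ j : Fin k → Bool,
          (eqF p1 i * A i l) * (eqF p2 j * B l j) := Finset.sum_comm
    _ = ∑ l : Fin k → Bool, (∑ i : Fin k → Bool, eqF p1 i * A i l) *
          (∑ j : Fin k → Bool, eqF p2 j * B l j) := by
        refine Finset.sum_congr rfl fun l _ => ?_
        rw [Finset.sum_mul_sum]
    _ = ∑ p3 : Fin k → Bool,
          MvPolynomial.eval (Sum.elim p1 (bvec p3)) PA *
            MvPolynomial.eval (Sum.elim (bvec p3) p2) PB := by
        refine Finset.sum_congr rfl fun p3 _ => ?_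
        rw [hAev, hBev]
end
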